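/- Let Λ be the ring of symmetric functions (or symmetric polynomials in N ≥ ℓ+1 variables), and define Q_m(ℓ) = s_{R(ℓ,m)}, the Schur function of the ℓ×m rectangle. Then for all m ≥ 2 and ℓ ≥ 1, Q_{m−2}(ℓ) divides Q_{m−1}(ℓ)² − Q_{m−1}(ℓ−1) Q_{m−1}(ℓ+1) in Λ, with quotient Q_m(ℓ). -/

import Mathlib

open Matrix

variable {R : Type*} [CommRing R]

lemma det_updateColumn_finset_sum {n : ℕ} (A : Matrix (Fin n) (Fin n) R) (j : Fin n)
    {ι : Type*} (s : Finset ι) (f : ι → Fin n → R) :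
    (A.updateCol j (∑ i ∈ s, f i)).det = ∑ i ∈ s, (A.updateCol j (f i)).det := by
  classical
  induction s using Finset.induction_on with
  | empty =>
    have : (∑ i ∈ (∅ : Finset ι), f i) = (0 : R) • (0 : Fin n → R) := by simp
    rw [this, det_updateCol_smul, Finset.sum_empty, zero_mul]
  | insert _ _ h ih =>
    rw [Finset.sum_insert h, Finset.sum_insert h, ← ih, ← det_updateCol_add]

omit [CommRing R] in
lemma updateColumn_comm' {n m : ℕ} (A : Matrix (Fin m) (Fin n) R) {i j : Fin n}
    (h : i ≠ j) (u v : Fin m → R) :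
    (A.updateCol i u).updateCol j v = (A.updateCol j v).updateCol i u := by
  ext a b
  rcases eq_or_ne b i with rfl | hbi <;> rcases eq_or_ne b j with rfl | hbj <;>
    simp_all [updateCol_apply]

lemma last_ne_zero' (n : ℕ) : (0 : Fin (n+2)) ≠ Fin.last (n+1) := by
  simp [Fin.ext_iff]

lemma D_val {n : ℕ} (i j : Fin (n+2)) :
    (((1 : Matrix (Fin (n+2)) (Fin (n+2)) R).updateCol 0 (Pi.single i 1)).updateCol
        (Fin.last (n+1)) (Pi.single j 1)).det
    = (if i = 0 then 1 else 0) * (if j = Fin.last (n+1) then 1 else 0)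
      - (if i = Fin.last (n+1) then 1 else 0) * (if j = 0 then 1 else 0) := by
  have h0L := last_ne_zero' n
  set M := ((1 : Matrix (Fin (n+2)) (Fin (n+2)) R).updateCol 0 (Pi.single i 1)).updateCol
      (Fin.last (n+1)) (Pi.single j 1) with hM
  have hMcol0 : ∀ k, M k 0 = (Pi.single i 1 : Fin (n+2) → R) k := by
    intro k; simp [hM, updateCol_apply, h0L]
  have hMcolL : ∀ k, M k (Fin.last (n+1)) = (Pi.single j 1 : Fin (n+2) → R) k := by
    intro k; simp [hM, updateCol_apply]
  have hMmid : ∀ k b, b ≠ 0 → b ≠ Fin.last (n+1) → M k b = (1 : Matrix _ _ R) k b := by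
    intro k b hb0 hbL; simp [hM, updateCol_apply, hb0, hbL]
  rcases eq_or_ne i j with rfl | hij
  · rw [det_zero_of_column_eq h0L (fun k => by rw [hMcol0, hMcolL])]
    rcases eq_or_ne i 0 with rfl | h0
    · simp [h0L.symm, (last_ne_zero' n).symm]
    · simp [h0]
  rcases eq_or_ne i 0 with rfl | hi0
  · rcases eq_or_ne j (Fin.last (n+1)) with rfl | hjL
    · -- identity matrix
      have : M = 1 := by
        ext a b
        rcases eq_or_ne b 0 with rfl | hb0
        · rw [hMcol0]; simp [Pi.single_apply, one_apply, eq_comm]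
        rcases eq_or_ne b (Fin.last (n+1)) with rfl | hbL
        · rw [hMcolL]; simp [Pi.single_apply, one_apply, eq_comm]
        · rw [hMmid a b hb0 hbL]
      simp [this, h0L.symm]
    · -- j is middle (j ≠ 0 since i = 0 ≠ j), columns L and j equal
      rw [det_zero_of_column_eq (Ne.symm hjL) (fun k => by
        rw [hMcolL, hMmid k j (Ne.symm hij) hjL]
        simp [Pi.single_apply, one_apply, eq_comm])]
      simp [hjL, h0L.symm]
  rcases eq_or_ne i (Fin.last (n+1)) with rfl | hiL
  · rcases eq_or_ne j 0 with rfl | hj0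
    · -- swap matrix
      have : M = (Equiv.swap (0 : Fin (n+2)) (Fin.last (n+1))).permMatrix R := by
        ext a b
        rw [Equiv.Perm.permMatrix, PEquiv.toMatrix_toPEquiv_apply, show ∀ x y : Fin (n+2),
          (Pi.single x (1:R) : Fin (n+2) → R) y = (1 : Matrix (Fin (n+2)) (Fin (n+2)) R) x y from
          fun x y => by simp [Pi.single_apply, one_apply, eq_comm]]
        rcases eq_or_ne b 0 with rfl | hb0
        · rw [hMcol0]
          have hiff : (Equiv.swap (0:Fin (n+2)) (Fin.last (n+1))) a = 0
              ↔ a = Fin.last (n+1) := by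
            rw [Equiv.swap_apply_eq_iff, Equiv.swap_apply_left]
          simp [Pi.single_apply, one_apply, hiff]
        rcases eq_or_ne b (Fin.last (n+1)) with rfl | hbL
        · rw [hMcolL]
          have hiff : (Equiv.swap (0:Fin (n+2)) (Fin.last (n+1))) a = Fin.last (n+1)
              ↔ a = 0 := by
            rw [Equiv.swap_apply_eq_iff, Equiv.swap_apply_right]
          simp [Pi.single_apply, one_apply, hiff]
        · rw [hMmid a b hb0 hbL]
          rcases eq_or_ne a 0 with rfl | ha0
          · simp [one_apply, Equiv.swap_apply_left, Ne.symm hb0, Ne.symm hbL]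
          rcases eq_or_ne a (Fin.last (n+1)) with rfl | haL
          · simp [one_apply, Equiv.swap_apply_right, Ne.symm hb0, Ne.symm hbL]
          · rw [Equiv.swap_apply_of_ne_of_ne ha0 haL]
      rw [this, det_permutation, Equiv.Perm.sign_swap h0L]
      simp [h0L.symm]
    ·
      rw [det_zero_of_column_eq (Ne.symm hij) (fun k => by
        rw [hMcolL, hMmid k j hj0 (Ne.symm hij)]
        simp [Pi.single_apply, one_apply, eq_comm])]
      simp [hj0, (h0L.symm)]
  · -- i middle: columns 0 and i equal
    rw [det_zero_of_column_eq (Ne.symm hi0) (fun k => by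
      rw [hMcol0, hMmid k i hi0 hiL]
      simp [Pi.single_apply, one_apply, eq_comm])]
    simp [hi0, hiL]

lemma det_one_updateColumn_pair {n : ℕ} (v w : Fin (n+2) → R) :
    (((1 : Matrix (Fin (n+2)) (Fin (n+2)) R).updateCol 0 v).updateCol
        (Fin.last (n+1)) w).det
    = v 0 * w (Fin.last (n+1)) - v (Fin.last (n+1)) * w 0 := by
  have h0L := last_ne_zero' n
  have hw : w = ∑ j : Fin (n+2), w j • (Pi.single j 1 : Fin (n+2) → R) := by
    ext k; simp [Pi.single_apply]
  have hv : v = ∑ i : Fin (n+2), v i • (Pi.single i 1 : Fin (n+2) → R) := by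
    ext k; simp [Pi.single_apply]
  conv_lhs => rw [hw]
  rw [det_updateColumn_finset_sum]
  have step1 : ∀ j : Fin (n+2),
      (((1 : Matrix (Fin (n+2)) (Fin (n+2)) R).updateCol 0 v).updateCol
        (Fin.last (n+1)) (w j • (Pi.single j 1 : Fin (n+2) → R))).det
      = ∑ i : Fin (n+2), v i * (w j *
        ((if i = 0 then 1 else 0) * (if j = Fin.last (n+1) then 1 else 0)
          - (if i = Fin.last (n+1) then 1 else 0) * (if j = 0 then 1 else 0))) := by
    intro j
    rw [det_updateCol_smul, updateColumn_comm' _ h0L]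
    conv_lhs => rw [hv]
    rw [det_updateColumn_finset_sum, Finset.mul_sum]
    refine Finset.sum_congr rfl fun i _ => ?_
    rw [det_updateCol_smul, updateColumn_comm' _ (Ne.symm h0L), D_val]
    ring
  simp_rw [step1]
  rw [Finset.sum_comm]
  simp [Finset.mul_sum, mul_sub, mul_ite, ite_mul, Finset.sum_sub_distrib, Finset.sum_ite_eq',
    mul_comm]

lemma dodgson_mul {n : ℕ} (M : Matrix (Fin (n+2)) (Fin (n+2)) R) :
    M.det * ((M.submatrix Fin.succ Fin.succ).det * (M.submatrix Fin.castSucc Fin.castSucc).det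
      - (M.submatrix Fin.succ Fin.castSucc).det * (M.submatrix Fin.castSucc Fin.succ).det)
    = M.det *
      (M.det * (M.submatrix (Fin.succ ∘ Fin.castSucc) (Fin.succ ∘ Fin.castSucc)).det) := by
  have h0L := last_ne_zero' n
  set L : Fin (n+2) := Fin.last (n+1) with hLdef
  set B : Matrix (Fin (n+2)) (Fin (n+2)) R :=
    ((1 : Matrix (Fin (n+2)) (Fin (n+2)) R).updateCol 0 (fun k => adjugate M k 0)).updateCol
      L (fun k => adjugate M k L) with hB
  -- Step 1: det B is the minor expression
  have hdetB : B.det = (M.submatrix Fin.succ Fin.succ).det *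
        (M.submatrix Fin.castSucc Fin.castSucc).det
      - (M.submatrix Fin.succ Fin.castSucc).det * (M.submatrix Fin.castSucc Fin.succ).det := by
    rw [hB, det_one_updateColumn_pair]
    rw [adjugate_fin_succ_eq_det_submatrix, adjugate_fin_succ_eq_det_submatrix,
      adjugate_fin_succ_eq_det_submatrix, adjugate_fin_succ_eq_det_submatrix]
    simp only [hLdef, Fin.succAbove_zero, Fin.succAbove_last, Fin.val_last, Fin.val_zero,
      add_zero, zero_add, pow_zero, one_mul]
    ring_nf
    rw [show ((-1:R)^(n*2)) = 1 by rw [mul_comm, pow_mul]; simp]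
    ring
  have hBcol0 : ∀ k, B k 0 = adjugate M k 0 := by
    intro k; simp [hB, updateCol_apply, h0L]
  have hBcolL : ∀ k, B k L = adjugate M k L := by
    intro k; simp [hB, updateCol_apply]
  have hBmid : ∀ k b, b ≠ 0 → b ≠ L → B k b = (1 : Matrix (Fin (n+2)) (Fin (n+2)) R) k b := by
    intro k b hb0 hbL; simp [hB, updateCol_apply, hb0, hbL]
  -- Step 2: M * B
  have hMB : M * B =
      (M.updateCol 0
        (M.det • fun i => (1 : Matrix (Fin (n+2)) (Fin (n+2)) R) i 0)).updateCol
        L (M.det • fun i => (1 : Matrix (Fin (n+2)) (Fin (n+2)) R) i L) := by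
    ext i j
    rw [mul_apply]
    rcases eq_or_ne j 0 with rfl | hj0
    · rw [show ∑ k, M i k * B k 0 = (M * adjugate M) i 0 from by
        rw [mul_apply]; exact Finset.sum_congr rfl fun k _ => by rw [hBcol0]]
      rw [mul_adjugate]
      simp [updateCol_apply, h0L, Ne.symm h0L]
    rcases eq_or_ne j L with rfl | hjL
    · rw [show ∑ k, M i k * B k L = (M * adjugate M) i L from by
        rw [mul_apply]; exact Finset.sum_congr rfl fun k _ => by rw [hBcolL]]
      rw [mul_adjugate]
      simp [updateCol_apply]
    · rw [show ∑ k, M i k * B k j = ∑ k, M i k * (1 : Matrix (Fin (n+2)) (Fin (n+2)) R) k j from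
        Finset.sum_congr rfl fun k _ => by rw [hBmid k j hj0 hjL]]
      simp [one_apply, mul_ite, Finset.sum_ite_eq', updateCol_apply, hj0, hjL]
  -- Step 3: factor the scalars out of det (M * B)
  have hdetMB : (M * B).det = M.det * (M.det *
      ((M.updateCol 0 (fun i => (1 : Matrix (Fin (n+2)) (Fin (n+2)) R) i 0)).updateCol
        L (fun i => (1 : Matrix (Fin (n+2)) (Fin (n+2)) R) i L)).det) := by
    rw [hMB, det_updateCol_smul, updateColumn_comm' _ h0L, det_updateCol_smul,
      updateColumn_comm' _ (Ne.symm h0L)]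
  -- Step 4: the remaining determinant is the inner minor
  have hfinal :
      ((M.updateCol 0 (fun i => (1 : Matrix (Fin (n+2)) (Fin (n+2)) R) i 0)).updateCol
        L (fun i => (1 : Matrix (Fin (n+2)) (Fin (n+2)) R) i L)).det
      = (M.submatrix (Fin.succ ∘ Fin.castSucc) (Fin.succ ∘ Fin.castSucc)).det := by
    set c0 : Fin (n+2) → R := fun i => (1 : Matrix (Fin (n+2)) (Fin (n+2)) R) i 0 with hc0
    set cL : Fin (n+2) → R := fun i => (1 : Matrix (Fin (n+2)) (Fin (n+2)) R) i L with hcL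
    set A : Matrix (Fin (n+2)) (Fin (n+2)) R := (M.updateCol 0 c0).updateCol L cL with hA
    have hAcol0 : ∀ i, A i 0 = (1 : Matrix (Fin (n+2)) (Fin (n+2)) R) i 0 := by
      intro i; simp [hA, updateCol_apply, h0L, hc0]
    rw [det_succ_column_zero]
    rw [Finset.sum_eq_single_of_mem 0 (Finset.mem_univ 0) (fun i _ hi => by
      rw [hAcol0, one_apply_ne hi]; ring)]
    rw [hAcol0, one_apply_eq, Fin.succAbove_zero]
    have hsub1 : A.submatrix Fin.succ Fin.succ
        = (M.updateCol L cL).submatrix Fin.succ Fin.succ := by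
      rw [hA, updateColumn_comm' _ h0L, ← Fin.succAbove_zero,
        submatrix_updateCol_succAbove]
    rw [hsub1]
    set A' : Matrix (Fin (n+1)) (Fin (n+1)) R :=
      (M.updateCol L cL).submatrix Fin.succ Fin.succ with hA'
    have hA'col : ∀ i, A' i (Fin.last n) =
        if i = Fin.last n then (1:R) else 0 := by
      intro i
      have : (Fin.last n).succ = L := Fin.succ_last n
      simp only [hA', submatrix_apply, this, updateCol_self, hcL]
      rw [one_apply]
      by_cases hi : i = Fin.last n
      · simp [hi, this]
      · have h2 : Fin.succ i ≠ L := by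
          rw [← this]; exact fun h => hi (Fin.succ_injective _ h)
        simp [hi, h2]
    rw [det_succ_column A' (Fin.last n)]
    rw [Finset.sum_eq_single_of_mem (Fin.last n) (Finset.mem_univ _) (fun i _ hi => by
      rw [hA'col, if_neg hi]; ring)]
    rw [hA'col, if_pos rfl, Fin.succAbove_last]
    have hpow : ((-1 : R) ^ ((Fin.last n : ℕ) + (Fin.last n : ℕ))) = 1 := by
      rw [← two_mul, pow_mul]; simp
    rw [hpow, one_mul, mul_one]
    rw [show A'.submatrix Fin.castSucc Fin.castSucc
        = M.submatrix (Fin.succ ∘ Fin.castSucc) (Fin.succ ∘ Fin.castSucc) from by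
      ext a b
      have hne : Fin.succ (Fin.castSucc b) ≠ L := by
        simp only [hLdef, Fin.ne_iff_vne, Fin.val_succ, Fin.coe_castSucc, Fin.val_last]
        omega
      simp [hA', updateCol_ne hne]]
    simp
  calc M.det * ((M.submatrix Fin.succ Fin.succ).det *
          (M.submatrix Fin.castSucc Fin.castSucc).det
        - (M.submatrix Fin.succ Fin.castSucc).det * (M.submatrix Fin.castSucc Fin.succ).det)
      = M.det * B.det := by rw [hdetB]
    _ = (M * B).det := (det_mul M B).symm
    _ = M.det * (M.det *
        (M.submatrix (Fin.succ ∘ Fin.castSucc) (Fin.succ ∘ Fin.castSucc)).det) := by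
        rw [hdetMB, hfinal]

/-- Desnanot–Jacobi / Dodgson condensation. -/
lemma dodgson {n : ℕ} (M : Matrix (Fin (n+2)) (Fin (n+2)) R) :
    M.det * (M.submatrix (Fin.succ ∘ Fin.castSucc) (Fin.succ ∘ Fin.castSucc)).det
    = (M.submatrix Fin.succ Fin.succ).det * (M.submatrix Fin.castSucc Fin.castSucc).det
      - (M.submatrix Fin.succ Fin.castSucc).det * (M.submatrix Fin.castSucc Fin.succ).det := by
  classical
  set S := MvPolynomial (Fin (n+2) × Fin (n+2)) ℤ with hS
  set X : Matrix (Fin (n+2)) (Fin (n+2)) S := fun i j => MvPolynomial.X (i,j) with hXdef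
  have hX : X.det ≠ 0 := by
    intro h
    have h2 := congrArg
      (MvPolynomial.eval (fun p : Fin (n+2) × Fin (n+2) => if p.1 = p.2 then (1:ℤ) else 0)) h
    rw [map_zero, RingHom.map_det] at h2
    have hXmap : X.map
        (MvPolynomial.eval fun p : Fin (n+2) × Fin (n+2) => if p.1 = p.2 then (1:ℤ) else 0)
        = (1 : Matrix (Fin (n+2)) (Fin (n+2)) ℤ) := by
      ext i j
      rw [Matrix.map_apply]
      simp [hXdef, Matrix.map_apply, Matrix.one_apply]
    rw [RingHom.mapMatrix_apply, hXmap, det_one] at h2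
    exact one_ne_zero h2
  have hcancel : X.det * (X.submatrix (Fin.succ ∘ Fin.castSucc) (Fin.succ ∘ Fin.castSucc)).det
      = (X.submatrix Fin.succ Fin.succ).det * (X.submatrix Fin.castSucc Fin.castSucc).det
        - (X.submatrix Fin.succ Fin.castSucc).det * (X.submatrix Fin.castSucc Fin.succ).det :=
    (mul_left_cancel₀ hX (dodgson_mul X)).symm
  set φ : S →+* R := MvPolynomial.eval₂Hom (Int.castRingHom R) (fun p => M p.1 p.2) with hφ
  have hmap : X.map φ = M := by
    ext i j
    rw [Matrix.map_apply]
    simp only [hXdef, hφ, Matrix.map_apply]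
    rw [MvPolynomial.eval₂Hom_X']
  have h3 := congrArg φ hcancel
  simp only [map_sub, _root_.map_mul, RingHom.map_det, RingHom.mapMatrix_apply,
    ← Matrix.submatrix_map, hmap] at h3
  exact h3


/-- `h_k` for `k ∈ ℤ`: complete homogeneous symmetric polynomial, zero in
negative degree. -/
noncomputable def hInt (N : ℕ) (k : ℤ) : MvPolynomial (Fin N) ℤ :=
  if 0 ≤ k then MvPolynomial.hsymm (Fin N) ℤ k.toNat else 0

/-- `Q_m(ℓ) = s_{R(ℓ,m)}`, the Schur polynomial of the `ℓ × m` rectangle,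
via the Jacobi–Trudi determinant. -/
noncomputable def QJT (N m ℓ : ℕ) : MvPolynomial (Fin N) ℤ :=
  Matrix.det (fun i j : Fin ℓ => hInt N ((m : ℤ) + (j : ℤ) - (i : ℤ)))

/-- In the ring of symmetric polynomials (in `N ≥ ℓ+1` variables), `Q_{m−2}(ℓ)`
divides `Q_{m−1}(ℓ)² − Q_{m−1}(ℓ−1) Q_{m−1}(ℓ+1)`, with quotient `Q_m(ℓ)`. -/
theorem stmt12 (N m ℓ : ℕ) (hN : ℓ + 1 ≤ N) (hm : 2 ≤ m) (hℓ : 1 ≤ ℓ) :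
    QJT N (m - 2) ℓ ∣
      (QJT N (m - 1) ℓ ^ 2 - QJT N (m - 1) (ℓ - 1) * QJT N (m - 1) (ℓ + 1)) ∧
    QJT N (m - 2) ℓ * QJT N m ℓ =
      QJT N (m - 1) ℓ ^ 2 - QJT N (m - 1) (ℓ - 1) * QJT N (m - 1) (ℓ + 1) := by
  obtain ⟨k, rfl⟩ : ∃ k, m = k + 2 := ⟨m - 2, by omega⟩
  obtain ⟨p, rfl⟩ : ∃ p, ℓ = p + 1 := ⟨ℓ - 1, by omega⟩
  simp only [Nat.add_sub_cancel, show k + 2 - 1 = k + 1 from by omega]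
  rw [show p + 1 + 1 = p + 2 by omega]
  set M : Matrix (Fin (p+2)) (Fin (p+2)) (MvPolynomial (Fin N) ℤ) :=
    fun i j => hInt N (((k+1 : ℕ) : ℤ) + (j : ℤ) - (i : ℤ)) with hM
  have hdet : M.det = QJT N (k+1) (p+2) := rfl
  have hSS : (M.submatrix Fin.succ Fin.succ).det = QJT N (k+1) (p+1) := by
    unfold QJT
    congr 1
    ext i j : 2
    rw [submatrix_apply]
    simp only [hM, submatrix_apply, Fin.val_succ]
    try (congr 1; push_cast; ring)
  have hCC : (M.submatrix Fin.castSucc Fin.castSucc).det = QJT N (k+1) (p+1) := rfl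
  have hSC : (M.submatrix Fin.succ Fin.castSucc).det = QJT N k (p+1) := by
    unfold QJT
    congr 1
    ext i j : 2
    rw [submatrix_apply]
    simp only [hM, submatrix_apply, Fin.val_succ, Fin.coe_castSucc]
    congr 1
    push_cast
    ring
  have hCS : (M.submatrix Fin.castSucc Fin.succ).det = QJT N (k+2) (p+1) := by
    unfold QJT
    congr 1
    ext i j : 2
    rw [submatrix_apply]
    simp only [hM, submatrix_apply, Fin.val_succ, Fin.coe_castSucc]
    congr 1
    push_cast
    ring
  have hIn : (M.submatrix (Fin.succ ∘ Fin.castSucc) (Fin.succ ∘ Fin.castSucc)).det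
      = QJT N (k+1) p := by
    unfold QJT
    congr 1
    ext i j : 2
    rw [submatrix_apply]
    simp only [hM, submatrix_apply, Function.comp_apply, Fin.val_succ, Fin.coe_castSucc]
    congr 1
    push_cast
    ring
  have hd := dodgson M
  rw [hdet, hSS, hCC, hSC, hCS, hIn] at hd
  have hmain : QJT N k (p+1) * QJT N (k+2) (p+1)
      = QJT N (k+1) (p+1) ^ 2 - QJT N (k+1) p * QJT N (k+1) (p+2) := by
    rw [sq]
    linear_combination hd
  exact ⟨Dvd.intro _ hmain, hmain⟩
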